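/- Sumset entropy increase formula: if X, Y are independent G-valued random variables, then Σ_y p_Y(y) Σ_z p_{X+y}(z) · log⁺( p_{X+y}(z) / p_{X+Y}(z) ) = H(X+Y) − H(X) + O(1), where the O(1) error is bounded by an absolute constant and log⁺ t = max(log t, 0). -/

import Mathlib

open Real
open scoped BigOperators Pointwise Classical

/-- A finitely supported probability space. -/
structure FinProb (Ω : Type*) [Fintype Ω] where
  p : Ω → ℝ
  nonneg : ∀ ω, 0 ≤ p ω
  sum_one : ∑ ω, p ω = 1

/-- Probability that the random variable `X` takes the value `s`. -/
noncomputable def prob {Ω S : Type*} [Fintype Ω] (μ : FinProb Ω) (X : Ω → S) (s : S) : ℝ :=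
  ∑ ω, if X ω = s then μ.p ω else 0

/-- Shannon entropy of a discrete random variable. -/
noncomputable def entropy {Ω S : Type*} [Fintype Ω] (μ : FinProb Ω) (X : Ω → S) : ℝ :=
  ∑ s ∈ Finset.univ.image X, Real.negMulLog (prob μ X s)

/-- Conditional Shannon entropy `H(X|Y) = H(X,Y) - H(Y)`. -/
noncomputable def condEntropy {Ω S T : Type*} [Fintype Ω] (μ : FinProb Ω)
    (X : Ω → S) (Y : Ω → T) : ℝ :=
  entropy μ (fun ω => (X ω, Y ω)) - entropy μ Y

/-- The essential range of a random variable: values attained with positive probability. -/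
noncomputable def rangeF {Ω S : Type*} [Fintype Ω] (μ : FinProb Ω) (X : Ω → S) : Finset S :=
  (Finset.univ.image X).filter (fun s => prob μ X s ≠ 0)

/-- Two random variables (on possibly different spaces) have the same distribution. -/
def IdentDist {Ω Ω' S : Type*} [Fintype Ω] [Fintype Ω'] (μ : FinProb Ω) (X : Ω → S)
    (μ' : FinProb Ω') (Y : Ω' → S) : Prop :=
  ∀ s, prob μ X s = prob μ' Y s

/-- Independence of two random variables. -/
def IndepRV {Ω S T : Type*} [Fintype Ω] (μ : FinProb Ω) (X : Ω → S) (Y : Ω → T) : Prop :=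
  ∀ s t, prob μ (fun ω => (X ω, Y ω)) (s, t) = prob μ X s * prob μ Y t

/-- Joint independence of a finite family of random variables. -/
def IndepFam {Ω ι : Type*} [Fintype Ω] [Fintype ι] {S : ι → Type*}
    (μ : FinProb Ω) (X : ∀ i, Ω → S i) : Prop :=
  ∀ f : ∀ i, S i, prob μ (fun ω i => X i ω) f = ∏ i, prob μ (X i) (f i)

/-- `X` and `Y` are conditionally independent given `W`. -/
def CondIndepGiven {Ω S T U : Type*} [Fintype Ω] (μ : FinProb Ω)
    (X : Ω → S) (Y : Ω → T) (W : Ω → U) : Prop :=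
  ∀ s t u, prob μ (fun ω => (X ω, Y ω, W ω)) (s, t, u) * prob μ W u
    = prob μ (fun ω => (X ω, W ω)) (s, u) * prob μ (fun ω => (Y ω, W ω)) (t, u)

/-- `Y` is determined by `X` (almost surely). -/
def Determines {Ω S T : Type*} [Fintype Ω] (μ : FinProb Ω) (X : Ω → S) (Y : Ω → T) : Prop :=
  ∃ f : S → T, ∀ ω, μ.p ω ≠ 0 → Y ω = f (X ω)

/-- The entropy transport distance between the distributions of `X` and `Y`:
the infimum of `H(Z)` over random variables `Z` (coupled with a copy `X'` of `X`)
such that `X' + Z` is distributed as `Y`. -/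
noncomputable def transDist {Ω₁ Ω₂ G : Type*} [Fintype Ω₁] [Fintype Ω₂] [AddCommGroup G]
    (μ : FinProb Ω₁) (X : Ω₁ → G) (ν : FinProb Ω₂) (Y : Ω₂ → G) : ℝ :=
  sInf {h : ℝ | ∃ (n : ℕ) (μ' : FinProb (Fin n)) (X' Z : Fin n → G),
    IdentDist μ' X' μ X ∧ IdentDist μ' (fun ω => X' ω + Z ω) ν Y ∧ entropy μ' Z = h}

/-- Conditioning a finitely supported probability space on an event `E`
(returning `μ` unchanged if `E` has zero probability). -/
noncomputable def condFinProb {Ω : Type*} [Fintype Ω] (μ : FinProb Ω) (E : Ω → Prop) :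
    FinProb Ω :=
  if h : 0 < ∑ ω, if E ω then μ.p ω else 0 then
    { p := fun ω => if E ω then μ.p ω / (∑ ω', if E ω' then μ.p ω' else 0) else 0
      nonneg := fun ω => by
        split
        · exact div_nonneg (μ.nonneg ω) h.le
        · exact le_refl 0
      sum_one := by
        have h' : ∀ ω, (if E ω then μ.p ω / (∑ ω', if E ω' then μ.p ω' else 0) else 0)
            = (if E ω then μ.p ω else 0) / (∑ ω', if E ω' then μ.p ω' else 0) := by
          intro ω; split <;> simp
        rw [Finset.sum_congr rfl (fun ω _ => h' ω), ← Finset.sum_div, div_self h.ne'] }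
  else μ

section Aux
variable {Ω : Type*} [Fintype Ω] {S : Type*}

lemma prob_nonneg' (μ : FinProb Ω) (X : Ω → S) (s : S) : 0 ≤ prob μ X s :=
  Finset.sum_nonneg fun ω _ => by split <;> simp [μ.nonneg ω]

lemma prob_eq_zero' (μ : FinProb Ω) (X : Ω → S) {s : S}
    (h : s ∉ Finset.univ.image X) : prob μ X s = 0 :=
  Finset.sum_eq_zero fun ω _ => if_neg fun he => h (Finset.mem_image.2 ⟨ω, Finset.mem_univ ω, he⟩)

lemma mem_image_of_prob_ne_zero' {μ : FinProb Ω} {X : Ω → S} {s : S}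
    (h : prob μ X s ≠ 0) : s ∈ Finset.univ.image X := by
  by_contra hc; exact h (prob_eq_zero' μ X hc)

lemma sum_prob' (μ : FinProb Ω) (X : Ω → S) :
    ∑ s ∈ Finset.univ.image X, prob μ X s = 1 := by
  rw [← μ.sum_one]
  unfold prob
  rw [Finset.sum_comm]
  refine Finset.sum_congr rfl fun ω _ => ?_
  rw [Finset.sum_ite_eq (Finset.univ.image X) (X ω) (fun _ => μ.p ω),
    if_pos (Finset.mem_image.2 ⟨ω, Finset.mem_univ ω, rfl⟩)]

lemma sum_rangeF' (μ : FinProb Ω) (X : Ω → S) (f : S → ℝ)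
    (hf : ∀ s, prob μ X s = 0 → f s = 0) :
    ∑ s ∈ rangeF μ X, f s = ∑ s ∈ Finset.univ.image X, f s := by
  unfold rangeF
  exact Finset.sum_filter_of_ne fun s _ h h0 => h (hf s h0)

lemma conv' {G : Type*} [AddCommGroup G] (μ : FinProb Ω) (X Y : Ω → G)
    (h : IndepRV μ X Y) (z : G) :
    prob μ (fun ω => X ω + Y ω) z
      = ∑ y ∈ Finset.univ.image Y, prob μ X (z - y) * prob μ Y y := by
  have h1 : ∀ y ∈ Finset.univ.image Y, prob μ X (z - y) * prob μ Y y
      = prob μ (fun ω => (X ω, Y ω)) (z - y, y) := fun y _ => (h _ _).symm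
  rw [Finset.sum_congr rfl h1]
  unfold prob
  rw [Finset.sum_comm]
  refine Finset.sum_congr rfl fun ω _ => ?_
  have h2 : ∀ y ∈ Finset.univ.image Y, (if (X ω, Y ω) = (z - y, y) then μ.p ω else 0)
      = if Y ω = y then (if X ω + Y ω = z then μ.p ω else 0) else 0 := by
    intro y _
    by_cases hy : Y ω = y
    · subst hy
      simp [Prod.ext_iff, eq_sub_iff_add_eq]
    · rw [if_neg hy, if_neg (fun hp => hy (congrArg Prod.snd hp))]
  have h3 : (if X ω + Y ω = z then μ.p ω else 0)
      = ∑ x ∈ Finset.univ.image Y, if (X ω, Y ω) = (z - x, x) then μ.p ω else 0 := by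
    rw [Finset.sum_congr rfl h2,
      Finset.sum_ite_eq (Finset.univ.image Y) (Y ω) (fun _ => if X ω + Y ω = z then μ.p ω else 0),
      if_pos (Finset.mem_image.2 ⟨ω, Finset.mem_univ ω, rfl⟩)]
  convert h3 using 2
  exact ite_congr rfl (fun _ => rfl) (fun _ => rfl)

lemma conv_ge' {G : Type*} [AddCommGroup G] (μ : FinProb Ω) (X Y : Ω → G)
    (h : IndepRV μ X Y) (x y : G) :
    prob μ X x * prob μ Y y ≤ prob μ (fun ω => X ω + Y ω) (x + y) := by
  rw [conv' μ X Y h]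
  rcases eq_or_ne (prob μ Y y) 0 with h0 | h0
  · rw [h0, mul_zero]
    exact Finset.sum_nonneg fun i _ => mul_nonneg (prob_nonneg' _ _ _) (prob_nonneg' _ _ _)
  · have hy := mem_image_of_prob_ne_zero' h0
    have := Finset.single_le_sum (f := fun y' => prob μ X (x + y - y') * prob μ Y y')
      (fun i _ => mul_nonneg (prob_nonneg' _ _ _) (prob_nonneg' _ _ _)) hy
    simpa using this

lemma sum_shift' {G : Type*} [AddCommGroup G] (μ : FinProb Ω) (X Y : Ω → G)
    (h : IndepRV μ X Y) {y : G} (hy : prob μ Y y ≠ 0) (g : ℝ → ℝ) (hg : g 0 = 0) :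
    ∑ z ∈ rangeF μ (fun ω => X ω + Y ω), g (prob μ X (z - y))
      = ∑ x ∈ Finset.univ.image X, g (prob μ X x) := by
  rw [← Finset.sum_filter_of_ne (p := fun z => prob μ X (z - y) ≠ 0)
    (fun z _ hz h0 => hz (by rw [h0, hg]))]
  rw [← Finset.sum_filter_of_ne (s := Finset.univ.image X) (p := fun x => prob μ X x ≠ 0)
    (fun x _ hx h0 => hx (by rw [h0, hg]))]
  refine Finset.sum_nbij' (fun z => z - y) (fun x => x + y) ?_ ?_ ?_ ?_ ?_
  · intro z hz
    rw [Finset.mem_filter] at hz ⊢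
    exact ⟨mem_image_of_prob_ne_zero' hz.2, hz.2⟩
  · intro x hx
    rw [Finset.mem_filter] at hx
    have hq : prob μ (fun ω => X ω + Y ω) (x + y) ≠ 0 := by
      have h1 := conv_ge' μ X Y h x y
      have h2 : 0 < prob μ X x * prob μ Y y :=
        lt_of_le_of_ne (mul_nonneg (prob_nonneg' _ _ _) (prob_nonneg' _ _ _))
          (Ne.symm (mul_ne_zero hx.2 hy))
      exact ne_of_gt (lt_of_lt_of_le h2 h1)
    rw [Finset.mem_filter]
    refine ⟨Finset.mem_filter.2 ⟨mem_image_of_prob_ne_zero' hq, hq⟩, ?_⟩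
    simpa using hx.2
  · intro z _; show z - y + y = z; abel
  · intro x _; show x + y - y = x; abel
  · intro z _; rfl

end Aux

/-- sumset entropy increase formula: there is an absolute constant `C`
such that for independent `G`-valued `X, Y`,
`|Σ_y p_Y(y) Σ_z p_{X+y}(z)·log⁺(p_{X+y}(z)/p_{X+Y}(z)) − (H(X+Y) − H(X))| ≤ C`,
where `y` ranges over the support of `Y` and `z` over the support of `X+Y`. -/
theorem sumset_entropy_increase :
    ∃ C : ℝ, ∀ (G : Type) [AddCommGroup G] (Ω : Type) [Fintype Ω]
      (μ : FinProb Ω) (X Y : Ω → G), IndepRV μ X Y →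
      |(∑ y ∈ rangeF μ Y, prob μ Y y *
          ∑ z ∈ rangeF μ (fun ω => X ω + Y ω), prob μ X (z - y) *
            max (Real.log (prob μ X (z - y) / prob μ (fun ω => X ω + Y ω) z)) 0)
        - (entropy μ (fun ω => X ω + Y ω) - entropy μ X)| ≤ C := by
  use 1
  intro G _ Ω _ μ X Y hind
  set q : G → ℝ := prob μ (fun ω => X ω + Y ω) with hqdef
  set Z : Finset G := rangeF μ (fun ω => X ω + Y ω) with hZdef
  set Yr : Finset G := rangeF μ Y with hYrdef
  have hq0 : ∀ z ∈ Z, q z ≠ 0 := fun z hz => (Finset.mem_filter.1 hz).2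
  have hy0 : ∀ y ∈ Yr, prob μ Y y ≠ 0 := fun y hy => (Finset.mem_filter.1 hy).2
  have hqnn : ∀ z, 0 ≤ q z := fun z => prob_nonneg' _ _ _
  have hXnn : ∀ x, 0 ≤ prob μ X x := fun x => prob_nonneg' _ _ _
  have hYnn : ∀ y, 0 ≤ prob μ Y y := fun y => prob_nonneg' _ _ _
  -- total mass facts
  have hsumY : ∑ y ∈ Yr, prob μ Y y = 1 := by
    rw [hYrdef]
    unfold rangeF
    rw [Finset.sum_filter_of_ne (fun y _ h => h)]
    exact sum_prob' μ Y
  have hsumq : ∑ z ∈ Z, q z = 1 := by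
    rw [hZdef, hqdef]
    unfold rangeF
    rw [Finset.sum_filter_of_ne (fun z _ h => h)]
    exact sum_prob' μ _
  -- entropies as plain sums
  have hentX : ∑ x ∈ Finset.univ.image X, prob μ X x * Real.log (prob μ X x)
      = - entropy μ X := by
    unfold entropy Real.negMulLog
    rw [← Finset.sum_neg_distrib]
    exact Finset.sum_congr rfl fun x _ => by ring
  have hentq : ∑ z ∈ Z, q z * Real.log (q z) = - entropy μ (fun ω => X ω + Y ω) := by
    rw [hZdef, hqdef, sum_rangeF' μ _ (fun z => prob μ (fun ω => X ω + Y ω) z *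
      Real.log (prob μ (fun ω => X ω + Y ω) z)) (fun s h0 => by simp [h0])]
    unfold entropy Real.negMulLog
    rw [← Finset.sum_neg_distrib]
    exact Finset.sum_congr rfl fun x _ => by ring
  -- the sum without the max
  have hA : (∑ y ∈ Yr, prob μ Y y *
        ∑ z ∈ Z, prob μ X (z - y) * Real.log (prob μ X (z - y) / q z))
      = entropy μ (fun ω => X ω + Y ω) - entropy μ X := by
    have split : ∀ y ∈ Yr,
        (∑ z ∈ Z, prob μ X (z - y) * Real.log (prob μ X (z - y) / q z))
          = (∑ z ∈ Z, prob μ X (z - y) * Real.log (prob μ X (z - y)))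
            - (∑ z ∈ Z, prob μ X (z - y) * Real.log (q z)) := by
      intro y _
      rw [← Finset.sum_sub_distrib]
      refine Finset.sum_congr rfl fun z hz => ?_
      rcases eq_or_ne (prob μ X (z - y)) 0 with h0 | h0
      · simp [h0]
      · rw [Real.log_div h0 (hq0 z hz), mul_sub]
    have first : ∀ y ∈ Yr,
        (∑ z ∈ Z, prob μ X (z - y) * Real.log (prob μ X (z - y))) = - entropy μ X := by
      intro y hy
      rw [hZdef, sum_shift' μ X Y hind (hy0 y hy) (fun t => t * Real.log t) (by simp)]
      exact hentX
    have second : (∑ y ∈ Yr, prob μ Y y * ∑ z ∈ Z, prob μ X (z - y) * Real.log (q z))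
        = - entropy μ (fun ω => X ω + Y ω) := by
      rw [← hentq]
      simp_rw [Finset.mul_sum]
      rw [Finset.sum_comm]
      refine Finset.sum_congr rfl fun z hz => ?_
      have h1 : ∀ y ∈ Yr, prob μ Y y * (prob μ X (z - y) * Real.log (q z))
          = (prob μ X (z - y) * prob μ Y y) * Real.log (q z) := fun y _ => by ring
      rw [Finset.sum_congr rfl h1, ← Finset.sum_mul]
      congr 1
      have h2 : (∑ y ∈ Yr, prob μ X (z - y) * prob μ Y y)
          = ∑ y ∈ Finset.univ.image Y, prob μ X (z - y) * prob μ Y y := by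
        rw [hYrdef]
        unfold rangeF
        exact Finset.sum_filter_of_ne fun y _ hne h0 => hne (by rw [h0, mul_zero])
      rw [h2]
      exact (conv' μ X Y hind z).symm
    calc (∑ y ∈ Yr, prob μ Y y *
            ∑ z ∈ Z, prob μ X (z - y) * Real.log (prob μ X (z - y) / q z))
        = ∑ y ∈ Yr, (prob μ Y y * (- entropy μ X)
            - prob μ Y y * ∑ z ∈ Z, prob μ X (z - y) * Real.log (q z)) := by
          refine Finset.sum_congr rfl fun y hy => ?_
          rw [split y hy, mul_sub, first y hy]
      _ = (∑ y ∈ Yr, prob μ Y y) * (- entropy μ X)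
            - ∑ y ∈ Yr, prob μ Y y * ∑ z ∈ Z, prob μ X (z - y) * Real.log (q z) := by
          rw [Finset.sum_sub_distrib, Finset.sum_mul]
      _ = entropy μ (fun ω => X ω + Y ω) - entropy μ X := by
          rw [hsumY, second]; ring
  -- the difference between the max-sum and the plain sum
  rw [← hA, abs_le]
  have hdiff : (∑ y ∈ Yr, prob μ Y y *
          ∑ z ∈ Z, prob μ X (z - y) *
            max (Real.log (prob μ X (z - y) / q z)) 0)
      - (∑ y ∈ Yr, prob μ Y y *
          ∑ z ∈ Z, prob μ X (z - y) * Real.log (prob μ X (z - y) / q z))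
      = ∑ y ∈ Yr, prob μ Y y *
          ∑ z ∈ Z, prob μ X (z - y) *
            (max (Real.log (prob μ X (z - y) / q z)) 0
              - Real.log (prob μ X (z - y) / q z)) := by
    rw [← Finset.sum_sub_distrib]
    refine Finset.sum_congr rfl fun y _ => ?_
    rw [← mul_sub, ← Finset.sum_sub_distrib]
    congr 1
    exact Finset.sum_congr rfl fun z _ => (mul_sub _ _ _).symm
  have htermnn : ∀ y, ∀ z, 0 ≤ prob μ X (z - y) *
      (max (Real.log (prob μ X (z - y) / q z)) 0 - Real.log (prob μ X (z - y) / q z)) :=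
    fun y z => mul_nonneg (hXnn _) (sub_nonneg.2 (le_max_left _ _))
  have htermub : ∀ y, ∀ z ∈ Z, prob μ X (z - y) *
      (max (Real.log (prob μ X (z - y) / q z)) 0 - Real.log (prob μ X (z - y) / q z))
      ≤ q z := by
    intro y z hz
    rcases eq_or_ne (prob μ X (z - y)) 0 with h0 | h0
    · simpa [h0] using hqnn z
    · have hp : 0 < prob μ X (z - y) := lt_of_le_of_ne (hXnn _) (Ne.symm h0)
      have hqz : 0 < q z := lt_of_le_of_ne (hqnn z) (Ne.symm (hq0 z hz))
      have h1 : max (Real.log (prob μ X (z - y) / q z)) 0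
          - Real.log (prob μ X (z - y) / q z)
          = max (Real.log (q z / prob μ X (z - y))) 0 := by
        have hmax : ∀ a : ℝ, max a 0 - a = max (-a) 0 := fun a => by
          rcases le_total a 0 with h | h
          · rw [max_eq_right h, max_eq_left (neg_nonneg.2 h), zero_sub]
          · rw [max_eq_left h, max_eq_right (neg_nonpos.2 h), sub_self]
        rw [Real.log_div h0 hqz.ne', Real.log_div hqz.ne' h0, hmax, neg_sub]
      rw [h1, mul_max_of_nonneg _ _ hp.le, mul_zero]
      have h2 : prob μ X (z - y) * Real.log (q z / prob μ X (z - y))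
          ≤ q z - prob μ X (z - y) := by
        have h3 := Real.log_le_sub_one_of_pos (div_pos hqz hp)
        have h4 := mul_le_mul_of_nonneg_left h3 hp.le
        calc prob μ X (z - y) * Real.log (q z / prob μ X (z - y))
            ≤ prob μ X (z - y) * (q z / prob μ X (z - y) - 1) := h4
          _ = q z - prob μ X (z - y) := by field_simp
      exact max_le (by linarith) hqz.le
  have hinner : ∀ y, (∑ z ∈ Z, prob μ X (z - y) *
      (max (Real.log (prob μ X (z - y) / q z)) 0 - Real.log (prob μ X (z - y) / q z))) ≤ 1 := by
    intro y
    calc (∑ z ∈ Z, prob μ X (z - y) *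
          (max (Real.log (prob μ X (z - y) / q z)) 0 - Real.log (prob μ X (z - y) / q z)))
        ≤ ∑ z ∈ Z, q z := Finset.sum_le_sum fun z hz => htermub y z hz
      _ = 1 := hsumq
  constructor
  · have : (0:ℝ) ≤ (∑ y ∈ Yr, prob μ Y y *
          ∑ z ∈ Z, prob μ X (z - y) * max (Real.log (prob μ X (z - y) / q z)) 0)
        - (∑ y ∈ Yr, prob μ Y y *
          ∑ z ∈ Z, prob μ X (z - y) * Real.log (prob μ X (z - y) / q z)) := by
      rw [hdiff]
      exact Finset.sum_nonneg fun y _ => mul_nonneg (hYnn y)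
        (Finset.sum_nonneg fun z _ => htermnn y z)
    linarith
  · have : (∑ y ∈ Yr, prob μ Y y *
          ∑ z ∈ Z, prob μ X (z - y) * max (Real.log (prob μ X (z - y) / q z)) 0)
        - (∑ y ∈ Yr, prob μ Y y *
          ∑ z ∈ Z, prob μ X (z - y) * Real.log (prob μ X (z - y) / q z)) ≤ 1 := by
      rw [hdiff]
      calc (∑ y ∈ Yr, prob μ Y y *
            ∑ z ∈ Z, prob μ X (z - y) *
              (max (Real.log (prob μ X (z - y) / q z)) 0
                - Real.log (prob μ X (z - y) / q z)))
          ≤ ∑ y ∈ Yr, prob μ Y y * 1 :=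
            Finset.sum_le_sum fun y _ => mul_le_mul_of_nonneg_left (hinner y) (hYnn y)
        _ = 1 := by simpa using hsumY
    linarith
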